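/- arXiv:1404.0666 — 2 statements merged into one kernel-verified Lean document; each statement's English description precedes it below -/
import Mathlib

section
/- For every left ℤG-module K, there is an isomorphism of abelian groups H^1(G, K) ≅ ker(d_2^*) / im(d_1^*), where d_1^*: K → K^{n} is given by d_1^*(k) = (a_1·k − k, …, a_n·k − k) and d_2^*: K^{n} → K is given by d_2^*(k_1, …, k_n) = Σ_{i=1}^n γ_i·k_i. -/
open scoped TensorProduct

namespace SurfaceNonOr

/-- The single relator `a₁²a₂²⋯aₙ²` of the nonorientable surface group. -/
def rel (n : ℕ) : FreeGroup (Fin n) :=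
  (List.ofFn fun i : Fin n => (FreeGroup.of i) ^ 2).prod

/-- The nonorientable surface group `⟨a₁,…,aₙ ∣ a₁²a₂²⋯aₙ²⟩`. -/
abbrev SurfaceGroup (n : ℕ) := PresentedGroup ({rel n} : Set (FreeGroup (Fin n)))

noncomputable def a {n : ℕ} (i : Fin n) : SurfaceGroup n := PresentedGroup.of i

/-- `r k = a₁²a₂²⋯a_k²`. -/
noncomputable def r {n : ℕ} (k : ℕ) : SurfaceGroup n :=
  ((List.ofFn fun i : Fin n => (a i) ^ 2).take k).prod

/-- The integral group ring `ℤG`. -/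
abbrev A (n : ℕ) := MonoidAlgebra ℤ (SurfaceGroup n)

/-- Inclusion of the group in its group ring. -/
noncomputable def j {n : ℕ} : SurfaceGroup n →* A n := MonoidAlgebra.of ℤ (SurfaceGroup n)

/-- The Fox derivative `∂p/∂aᵢ = r_{i-1}(1 + aᵢ)`. -/
noncomputable def Fa {n : ℕ} (i : Fin n) : A n := j (r i.val) * (1 + j (a i))

abbrev P0 (n : ℕ) := A n
abbrev P1 (n : ℕ) := Fin n → A n
abbrev P2 (n : ℕ) := A n

/-- `d₁ : P₁ → P₀`, `yᵢ ↦ (aᵢ-1)x`. -/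
noncomputable def d1 {n : ℕ} : P1 n →ₗ[A n] P0 n where
  toFun f := ∑ s, f s * (j (a s) - 1)
  map_add' f g := by simp [add_mul, Finset.sum_add_distrib]
  map_smul' r f := by simp [Finset.mul_sum, mul_assoc, smul_eq_mul, mul_add]

/-- `d₂ : P₂ → P₁`, `w ↦ Σᵢ (∂p/∂aᵢ)yᵢ`. -/
noncomputable def d2 {n : ℕ} : P2 n →ₗ[A n] P1 n where
  toFun c := fun s => c * Fa s
  map_add' c c' := by funext s; simp [add_mul]
  map_smul' c c' := by funext s; simp [mul_assoc, smul_eq_mul]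

/-- The augmentation `ε : ℤG → ℤ`. -/
noncomputable def aug {n : ℕ} : A n →ₐ[ℤ] ℤ := MonoidAlgebra.lift ℤ ℤ (SurfaceGroup n) 1

/-- A left `ℤG`-module `K`, viewed as an object of `Rep ℤ G` (on the type synonym
`RestrictScalars ℤ ℤG K`). -/
noncomputable def RepOfModule (n : ℕ) (K : Type) [AddCommGroup K] [Module (A n) K] :
    Rep ℤ (SurfaceGroup n) :=
  @Rep.of ℤ (SurfaceGroup n) _ _ (RestrictScalars ℤ (A n) K) _
    (RestrictScalars.module ℤ (A n) K) (Representation.ofModule K)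

/-- The `ℤ`-linear action of an element of `ℤG` on a `ℤG`-module `K`. -/
noncomputable def act {n : ℕ} (K : Type) [AddCommGroup K] [Module (A n) K] (x : A n) :
    K →ₗ[ℤ] K :=
  (DistribSMul.toAddMonoidHom K x).toIntLinearMap

/-- `d₁* : K → Kⁿ`, `k ↦ (a₁k - k, …, aₙk - k)`. -/
noncomputable def d1star {n : ℕ} (K : Type) [AddCommGroup K] [Module (A n) K] :
    K →ₗ[ℤ] (Fin n → K) :=
  LinearMap.pi fun i => act K (j (a i)) - LinearMap.id

/-- `d₂* : Kⁿ → K`, `(k₁,…,kₙ) ↦ Σᵢ γᵢ kᵢ`. -/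
noncomputable def d2star {n : ℕ} (K : Type) [AddCommGroup K] [Module (A n) K] :
    (Fin n → K) →ₗ[ℤ] K :=
  ∑ i : Fin n, (act K (Fa i)).comp (LinearMap.proj i)


/-! ### Auxiliary development -/

open groupCohomology CategoryTheory

/-- The 1-coboundaries, as a submodule of the 1-cocycles. -/
def oneCoboundaries {G : Type} [Group G] (M : Rep ℤ G) : Submodule ℤ (cocycles₁ M) :=
  AddSubgroup.toIntSubmodule
    ((coboundaries₁ M).toAddSubgroup.comap (cocycles₁ M).toAddSubgroup.subtype)

lemma mem_oneCoboundaries_iff {G : Type} [Group G] {M : Rep ℤ G} (f : cocycles₁ M) :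
    f ∈ oneCoboundaries M ↔ ∃ x : M, ∀ g : G, M.ρ g x - x = f g := by
  show (⇑f ∈ coboundaries₁ M) ↔ _
  simp only [coboundaries₁, LinearMap.mem_range, funext_iff, d₀₁_hom_apply]

section Aux

variable {n : ℕ} (K : Type) [AddCommGroup K] [Module (A n) K]

lemma act_apply (x : A n) (k : K) : act K x k = x • k := rfl

lemma rho_act (g : SurfaceGroup n) (x : RestrictScalars ℤ (A n) K) :
    (RepOfModule n K).ρ g x = act K (j g) x := rfl

/-- Evaluation of a 1-cocycle, landing in `K`. -/
noncomputable def ev (f : cocycles₁ (RepOfModule n K)) (g : SurfaceGroup n) : K := f g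

lemma ev_mul (f : cocycles₁ (RepOfModule n K)) (g h : SurfaceGroup n) :
    ev K f (g * h) = j g • ev K f h + ev K f g := by
  have := (mem_cocycles₁_iff ((f : SurfaceGroup n → RepOfModule n K))).1 f.2 g h
  exact this

lemma ev_one (f : cocycles₁ (RepOfModule n K)) : ev K f 1 = 0 :=
  cocycles₁_map_one f

lemma ev_add (f g : cocycles₁ (RepOfModule n K)) (x : SurfaceGroup n) :
    ev K (f + g) x = ev K f x + ev K g x := rfl

lemma ev_sub (f g : cocycles₁ (RepOfModule n K)) (x : SurfaceGroup n) :
    ev K (f - g) x = ev K f x - ev K g x := rfl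

lemma ev_smul (c : ℤ) (f : cocycles₁ (RepOfModule n K)) (x : SurfaceGroup n) :
    ev K (c • f) x = c • ev K f x := rfl

lemma r_zero : (r 0 : SurfaceGroup n) = 1 := rfl

lemma r_succ {k : ℕ} (hk : k < n) :
    (r (k + 1) : SurfaceGroup n) = r k * (a ⟨k, hk⟩) ^ 2 := by
  have hlen : k < (List.ofFn fun i : Fin n => (a i) ^ 2).length := by
    simpa using hk
  have := List.prod_take_succ (List.ofFn fun i : Fin n => (a i) ^ 2) k hlen
  rw [r, r, this]
  congr 1
  simp

lemma r_top : (r n : SurfaceGroup n) = 1 := by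
  have hlen : (List.ofFn fun i : Fin n => (a i) ^ 2).length = n := by simp
  have h1 : (r n : SurfaceGroup n)
      = (List.ofFn fun i : Fin n => (a i) ^ 2).prod := by
    rw [r, List.take_of_length_le hlen.le]
  have h2 : (List.ofFn fun i : Fin n => (a i) ^ 2)
      = (List.ofFn fun i : Fin n => (FreeGroup.of i) ^ 2).map
          (PresentedGroup.mk ({rel n} : Set (FreeGroup (Fin n)))) := by
    rw [List.map_ofFn]
    congr 1
  have h3 : (PresentedGroup.mk ({rel n} : Set (FreeGroup (Fin n)))) (rel n) = 1 := by
    have : rel n ∈ Subgroup.normalClosure ({rel n} : Set (FreeGroup (Fin n))) :=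
      Subgroup.subset_normalClosure (Set.mem_singleton _)
    exact (QuotientGroup.eq_one_iff _).2 this
  rw [h1, h2, List.prod_hom _ (PresentedGroup.mk _), ← rel, h3]

lemma ev_sq (f : cocycles₁ (RepOfModule n K)) (i : Fin n) :
    ev K f ((a i) ^ 2) = ev K f (a i) + j (a i) • ev K f (a i) := by
  rw [sq, ev_mul, add_comm]

lemma Fa_smul (i : Fin n) (x : K) :
    (Fa i : A n) • x = (j (r i.val) : A n) • (x + (j (a i) : A n) • x) := by
  rw [Fa, mul_smul, add_smul, one_smul]

lemma ev_r (f : cocycles₁ (RepOfModule n K)) (k : ℕ) (hk : k ≤ n) :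
    ev K f (r k) = ∑ i : Fin n, if (i : ℕ) < k then Fa i • ev K f (a i) else 0 := by
  induction k with
  | zero => simp [r_zero, ev_one]
  | succ m ih =>
      have hm : m < n := hk
      rw [r_succ hm, ev_mul, ih (le_of_lt hm), ev_sq]
      have hsplit : ∀ i : Fin n,
          (if (i : ℕ) < m + 1 then Fa i • ev K f (a i) else 0)
          = (if (i : ℕ) < m then Fa i • ev K f (a i) else 0)
            + (if i = (⟨m, hm⟩ : Fin n) then Fa i • ev K f (a i) else 0) := by
        intro i
        rcases lt_trichotomy (i : ℕ) m with h | h | h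
        · rw [if_pos (Nat.lt_succ_of_lt h), if_pos h,
            if_neg (by simp [Fin.ext_iff]; omega), add_zero]
        · rw [if_pos (by omega), if_neg (by omega), if_pos (by simp [Fin.ext_iff, h]),
            zero_add]
        · rw [if_neg (by omega), if_neg (by omega), if_neg (by simp [Fin.ext_iff]; omega),
            add_zero]
      rw [Finset.sum_congr rfl fun i _ => hsplit i, Finset.sum_add_distrib,
        Finset.sum_ite_eq' Finset.univ (⟨m, hm⟩ : Fin n) (fun i => Fa i • ev K f (a i)),
        if_pos (Finset.mem_univ _)]
      rw [Fa_smul]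
      simp only [Fin.val_mk]
      exact add_comm _ _

lemma d2star_apply (v : Fin n → K) : d2star K v = ∑ i : Fin n, Fa i • v i := by
  rw [d2star]
  simp [act_apply]

lemma d2star_ev (f : cocycles₁ (RepOfModule n K)) :
    d2star K (fun i => ev K f (a i)) = 0 := by
  have h := ev_r K f n le_rfl
  rw [r_top, ev_one] at h
  rw [d2star_apply,
    show (∑ i : Fin n, Fa i • ev K f (a i))
        = ∑ i : Fin n, if (i : ℕ) < n then Fa i • ev K f (a i) else 0 from
      Finset.sum_congr rfl fun i _ => (if_pos i.isLt).symm, ← h]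

/-- A cocycle vanishing on the generators vanishes. -/
lemma ev_eq_zero (f : cocycles₁ (RepOfModule n K)) (h : ∀ i, ev K f (a i) = 0)
    (g : SurfaceGroup n) : ev K f g = 0 := by
  let S : Subgroup (SurfaceGroup n) :=
    { carrier := {g | ev K f g = 0}
      one_mem' := ev_one K f
      mul_mem' := by
        intro x y hx hy
        show ev K f (x * y) = 0
        rw [ev_mul, hx, hy, smul_zero, add_zero]
      inv_mem' := by
        intro x hx
        show ev K f x⁻¹ = 0
        have h1 : ev K f (x * x⁻¹) = 0 := by rw [mul_inv_cancel]; exact ev_one K f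
        rw [ev_mul, hx, add_zero] at h1
        have := congrArg (fun t => j x⁻¹ • t) h1
        simpa [smul_smul, ← map_mul] using this }
  have hS : S = ⊤ := by
    rw [eq_top_iff, ← PresentedGroup.closure_range_of ({rel n} : Set (FreeGroup (Fin n)))]
    apply Subgroup.closure_le S |>.2
    rintro _ ⟨i, rfl⟩
    exact h i
  have : g ∈ S := hS ▸ Subgroup.mem_top g
  exact this

section Surj

variable {K}

/-- The action of `G` on `Multiplicative K` as multiplicative automorphisms. -/
noncomputable def φK (g : SurfaceGroup n) : MulAut (Multiplicative K) where
  toFun x := Multiplicative.ofAdd (j g • x.toAdd)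
  invFun x := Multiplicative.ofAdd (j g⁻¹ • x.toAdd)
  left_inv x := by simp [smul_smul, ← map_mul]
  right_inv x := by simp [smul_smul, ← map_mul]
  map_mul' x y := by
    simp [smul_add]

noncomputable def φKhom : SurfaceGroup n →* MulAut (Multiplicative K) where
  toFun := φK
  map_one' := by
    ext x
    show Multiplicative.ofAdd (j (1 : SurfaceGroup n) • x.toAdd) = x
    simp
  map_mul' g h := by
    ext x
    show Multiplicative.ofAdd (j (g * h) • x.toAdd)
        = Multiplicative.ofAdd (j g • (j h • x.toAdd))
    rw [smul_smul, ← map_mul]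

lemma φKhom_apply (g : SurfaceGroup n) (x : Multiplicative K) :
    φKhom g x = Multiplicative.ofAdd ((j g : A n) • x.toAdd) := rfl

variable (v : Fin n → K)

/-- Candidate images of generators in the semidirect product. -/
noncomputable def genImg (i : Fin n) :
    SemidirectProduct (Multiplicative K) (SurfaceGroup n) (φKhom (n := n)) :=
  ⟨Multiplicative.ofAdd (v i), a i⟩

noncomputable def Fhom :
    FreeGroup (Fin n) →* SemidirectProduct (Multiplicative K) (SurfaceGroup n) φKhom :=
  FreeGroup.lift (genImg v)

lemma Fhom_prefix (k : ℕ) (hk : k ≤ n) :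
    Fhom v (((List.ofFn fun i : Fin n => (FreeGroup.of i) ^ 2).take k).prod)
      = ⟨Multiplicative.ofAdd (∑ i : Fin n, if (i : ℕ) < k then Fa i • v i else 0),
          r k⟩ := by
  induction k with
  | zero =>
      simp only [List.take_zero, List.prod_nil, map_one]
      refine (SemidirectProduct.ext ?_ ?_).symm
      · show Multiplicative.ofAdd (∑ i : Fin n, if (i : ℕ) < 0 then Fa i • v i else 0) = 1
        simp
      · show (r 0 : SurfaceGroup n) = 1
        rfl
  | succ m ih =>
      have hm : m < n := hk
      have hlen : m < (List.ofFn fun i : Fin n => (FreeGroup.of i) ^ 2).length := by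
        simpa using hm
      have hih := ih (le_of_lt hm)
      have hXl : ((Fhom v) ((List.ofFn fun i : Fin n => (FreeGroup.of i) ^ 2).take m).prod).left
          = Multiplicative.ofAdd (∑ i : Fin n, if (i : ℕ) < m then Fa i • v i else 0) := by
        rw [hih]
      have hXr : ((Fhom v) ((List.ofFn fun i : Fin n => (FreeGroup.of i) ^ 2).take m).prod).right
          = r m := by rw [hih]
      rw [List.prod_take_succ _ _ hlen, map_mul]
      have hget : (List.ofFn fun i : Fin n => (FreeGroup.of i) ^ 2)[m]'hlen
          = (FreeGroup.of (⟨m, hm⟩ : Fin n)) ^ 2 := by simp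
      rw [hget, map_pow]
      have hFof : Fhom v (FreeGroup.of (⟨m, hm⟩ : Fin n)) = genImg v ⟨m, hm⟩ :=
        FreeGroup.lift_apply_of
      rw [hFof]
      refine SemidirectProduct.ext ?_ ?_
      · have hsq : ((genImg v (⟨m, hm⟩ : Fin n) : SemidirectProduct _ _ _) ^ 2).left
            = Multiplicative.ofAdd (v ⟨m, hm⟩ + j (a ⟨m, hm⟩) • v ⟨m, hm⟩) := by
          rw [sq, SemidirectProduct.mul_left, φKhom_apply]
          rfl
        rw [SemidirectProduct.mul_left, hsq, hXl, hXr, φKhom_apply, toAdd_ofAdd,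
          ← ofAdd_add]
        show Multiplicative.ofAdd _ = Multiplicative.ofAdd _
        congr 1
        rw [show (j (r m) : A n) • (v ⟨m, hm⟩ + j (a ⟨m, hm⟩) • v ⟨m, hm⟩)
              = Fa (⟨m, hm⟩ : Fin n) • v ⟨m, hm⟩ from (Fa_smul K (⟨m, hm⟩ : Fin n) (v ⟨m, hm⟩)).symm]
        have hsplit : ∀ i : Fin n,
            (if (i : ℕ) < m + 1 then Fa i • v i else 0)
            = (if (i : ℕ) < m then Fa i • v i else 0)
              + (if i = (⟨m, hm⟩ : Fin n) then Fa i • v i else 0) := by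
          intro i
          rcases lt_trichotomy (i : ℕ) m with h | h | h
          · rw [if_pos (Nat.lt_succ_of_lt h), if_pos h,
              if_neg (by simp [Fin.ext_iff]; omega), add_zero]
          · rw [if_pos (by omega), if_neg (by omega), if_pos (by simp [Fin.ext_iff, h]),
              zero_add]
          · rw [if_neg (by omega), if_neg (by omega), if_neg (by simp [Fin.ext_iff]; omega),
              add_zero]
        rw [Finset.sum_congr rfl fun i _ => hsplit i, Finset.sum_add_distrib,
          Finset.sum_ite_eq' Finset.univ (⟨m, hm⟩ : Fin n) (fun i => Fa i • v i),
          if_pos (Finset.mem_univ _)]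
      · have hsr : ((genImg v (⟨m, hm⟩ : Fin n) : SemidirectProduct _ _ _) ^ 2).right
            = (a ⟨m, hm⟩) ^ 2 := by rw [sq, SemidirectProduct.mul_right]; rw [sq]; rfl
        rw [SemidirectProduct.mul_right, hsr, hXr]
        exact (r_succ hm).symm

lemma Fhom_rel (hv : d2star K v = 0) : Fhom v (rel n) = 1 := by
  have h1 := Fhom_prefix v n le_rfl
  have hlen : (List.ofFn fun i : Fin n => (FreeGroup.of i) ^ 2).length = n := by simp
  rw [List.take_of_length_le hlen.le] at h1
  have h1' : Fhom v (rel n)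
      = ⟨Multiplicative.ofAdd (∑ i : Fin n, if (i : ℕ) < n then Fa i • v i else 0), r n⟩ :=
    h1
  rw [h1']
  have h2 : (∑ i : Fin n, if (i : ℕ) < n then Fa i • v i else 0) = 0 := by
    rw [show (∑ i : Fin n, if (i : ℕ) < n then Fa i • v i else 0)
          = ∑ i : Fin n, Fa i • v i from
        Finset.sum_congr rfl fun i _ => if_pos i.isLt, ← d2star_apply, hv]
  rw [h2, r_top]
  rfl

/-- The crossed homomorphism `G → K ⋊ G` extending the generator assignment. -/
noncomputable def Φh (hv : d2star K v = 0) :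
    SurfaceGroup n →* SemidirectProduct (Multiplicative K) (SurfaceGroup n) φKhom :=
  PresentedGroup.toGroup (f := genImg v) (by
    rintro x hx
    rw [Set.mem_singleton_iff] at hx
    subst hx
    exact Fhom_rel v hv)

lemma Φh_of (hv : d2star K v = 0) (i : Fin n) : Φh v hv (a i) = genImg v i :=
  PresentedGroup.toGroup.of _

lemma Φh_right (hv : d2star K v = 0) (g : SurfaceGroup n) :
    (Φh v hv g).right = g := by
  have : (SemidirectProduct.rightHom.comp (Φh v hv)) = MonoidHom.id (SurfaceGroup n) := by
    refine PresentedGroup.ext fun x => ?_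
    show SemidirectProduct.rightHom (Φh v hv (a x)) = PresentedGroup.of x
    rw [Φh_of]
    rfl
  exact congrArg (fun φ => φ g) (congrArg DFunLike.coe this)

/-- The cocycle associated to a kernel element. -/
noncomputable def fov (hv : d2star K v = 0) (g : SurfaceGroup n) : K :=
  Multiplicative.toAdd (Φh v hv g).left

lemma fov_mul (hv : d2star K v = 0) (g h : SurfaceGroup n) :
    fov v hv (g * h) = j g • fov v hv h + fov v hv g := by
  rw [fov, map_mul, SemidirectProduct.mul_left, Φh_right, toAdd_mul, φKhom_apply,
    toAdd_ofAdd]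
  exact add_comm _ _

lemma fov_mem (hv : d2star K v = 0) :
    fov v hv ∈ cocycles₁ (RepOfModule n K) := by
  refine (mem_cocycles₁_iff _).2 ?_
  intro g h
  show fov v hv (g * h) = j g • fov v hv h + fov v hv g
  exact fov_mul v hv g h

lemma fov_gen (hv : d2star K v = 0) (i : Fin n) : fov v hv (a i) = v i := by
  show Multiplicative.toAdd ((Φh v hv (a i)).left) = v i
  rw [Φh_of]
  rfl

end Surj

/-- The restriction-to-generators map, as an `AddMonoidHom`. -/
noncomputable def toGensHom : cocycles₁ (RepOfModule n K) →+ (Fin n → K) where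
  toFun f := fun i => ev K f (a i)
  map_zero' := rfl
  map_add' f g := funext fun i => ev_add K f g (a i)

lemma toGensHom_mem_ker (f : cocycles₁ (RepOfModule n K)) :
    toGensHom K f ∈ LinearMap.ker (d2star K) := by
  rw [LinearMap.mem_ker]
  exact d2star_ev K f

noncomputable def toKerHom :
    cocycles₁ (RepOfModule n K) →+ LinearMap.ker (d2star (n := n) K) where
  toFun f := ⟨toGensHom K f, toGensHom_mem_ker K f⟩
  map_zero' := Subtype.ext (map_zero (toGensHom K))
  map_add' f g := Subtype.ext (map_add (toGensHom K) f g)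

lemma toKerHom_bijective : Function.Bijective (toKerHom (n := n) K) := by
  constructor
  · intro f g hfg
    have h : ∀ i, ev K f (a i) = ev K g (a i) := fun i =>
      congrFun (congrArg Subtype.val hfg) i
    have hz : ∀ x, ev K (f - g) x = 0 := by
      refine ev_eq_zero K (f - g) fun i => ?_
      rw [ev_sub, h i, sub_self]
    have hfg2 : f - g = 0 := by
      apply cocycles₁_ext
      intro x
      exact hz x
    exact sub_eq_zero.1 hfg2
  · rintro ⟨v, hv⟩
    rw [LinearMap.mem_ker] at hv
    refine ⟨⟨fov (K := K) v hv, fov_mem (K := K) v hv⟩, ?_⟩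
    apply Subtype.ext
    funext i
    exact fov_gen (K := K) v hv i

noncomputable def kerEquiv :
    cocycles₁ (RepOfModule n K) ≃+ LinearMap.ker (d2star (n := n) K) :=
  AddEquiv.ofBijective (toKerHom K) (toKerHom_bijective K)

lemma d1star_apply (x : K) (i : Fin n) : d1star K x i = j (a i) • x - x := rfl

lemma map_cobound :
    AddSubgroup.map (kerEquiv K).toAddMonoidHom
        (oneCoboundaries (RepOfModule n K)).toAddSubgroup
      = (Submodule.comap (LinearMap.ker (d2star (n := n) K)).subtype
          (LinearMap.range (d1star K))).toAddSubgroup := by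
  ext x
  simp only [AddSubgroup.mem_map, Submodule.mem_toAddSubgroup, Submodule.mem_comap,
    LinearMap.mem_range]
  constructor
  · rintro ⟨f, hf, rfl⟩
    rcases (mem_oneCoboundaries_iff f).1 hf with ⟨x0, hx0⟩
    refine ⟨x0, ?_⟩
    funext i
    exact (d1star_apply K x0 i).trans (hx0 (a i))
  · rintro ⟨x0, hx0⟩
    have hc : (fun g => (j g : A n) • x0 - x0) ∈ cocycles₁ (RepOfModule n K) := by
      refine (mem_cocycles₁_iff _).2 ?_
      intro g h
      show (j (g * h) : A n) • x0 - x0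
          = (j g : A n) • ((j h : A n) • x0 - x0) + ((j g : A n) • x0 - x0)
      rw [map_mul, mul_smul, smul_sub]
      abel
    have hb : (⟨fun g => (j g : A n) • x0 - x0, hc⟩ : cocycles₁ (RepOfModule n K))
        ∈ oneCoboundaries (RepOfModule n K) :=
      (mem_oneCoboundaries_iff _).2 ⟨x0, fun g => rfl⟩
    refine ⟨⟨fun g => (j g : A n) • x0 - x0, hc⟩, hb, ?_⟩
    apply Subtype.ext
    funext i
    exact congrFun hx0 i

end Aux

/-- for every left `ℤG`-module `K`,
`H¹(G,K) ≅ ker(d₂*) / im(d₁*)`. -/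
theorem statement11 (n : ℕ) (hn : 2 ≤ n) (K : Type) [AddCommGroup K] [Module (A n) K] :
    Nonempty
      (groupCohomology (RepOfModule n K) 1 ≃+
        ↥(LinearMap.ker (d2star K)) ⧸
          Submodule.comap (LinearMap.ker (d2star (n := n) K)).subtype
            (LinearMap.range (d1star K))) := by
  refine ⟨?_⟩
  have e2 := QuotientAddGroup.congr
    ((oneCoboundaries (RepOfModule n K)).toAddSubgroup)
    ((Submodule.comap (LinearMap.ker (d2star (n := n) K)).subtype
        (LinearMap.range (d1star K))).toAddSubgroup)
    (kerEquiv K) (map_cobound K)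
  have e1 : (groupCohomology (RepOfModule n K) 1) ≃+
      (cocycles₁ (RepOfModule n K) ⧸ (oneCoboundaries (RepOfModule n K)).toAddSubgroup) := by
    have hs : Function.Surjective (H1π (RepOfModule n K)).hom :=
      (ModuleCat.epi_iff_surjective _).1 inferInstance
    have hk : (H1π (RepOfModule n K)).hom.toAddMonoidHom.ker
        = (oneCoboundaries (RepOfModule n K)).toAddSubgroup := by
      ext x
      rw [AddMonoidHom.mem_ker, Submodule.mem_toAddSubgroup]
      exact H1π_eq_zero_iff x
    exact (QuotientAddGroup.quotientKerEquivOfSurjective _ hs).symm.trans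
      (QuotientAddGroup.quotientAddEquivOfEq hk)
  exact e1.trans e2

end SurfaceNonOr
end

section
/- Let ℤ denote the trivial ℤG-module. Then there are isomorphisms of abelian groups H^0(G, ℤ) ≅ ℤ, H^1(G, ℤ) ≅ ℤ^{2n}, and H^2(G, ℤ) ≅ ℤ. -/
open scoped TensorProduct
open scoped commutatorElement

namespace SurfaceOr

/-- Generators: `Sum.inl i` is `aᵢ`, `Sum.inr i` is `bᵢ`. -/
abbrev Gen (n : ℕ) := Fin n ⊕ Fin n

/-- The single relator `[a₁,b₁][a₂,b₂]⋯[aₙ,bₙ]` of the orientable surface group. -/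
def rel (n : ℕ) : FreeGroup (Gen n) :=
  (List.ofFn fun i : Fin n =>
    ⁅(FreeGroup.of (Sum.inl i) : FreeGroup (Gen n)), FreeGroup.of (Sum.inr i)⁆).prod

/-- The orientable surface group of genus `n`. -/
abbrev SurfaceGroup (n : ℕ) := PresentedGroup ({rel n} : Set (FreeGroup (Gen n)))

noncomputable def a {n : ℕ} (i : Fin n) : SurfaceGroup n := PresentedGroup.of (Sum.inl i)
noncomputable def b {n : ℕ} (i : Fin n) : SurfaceGroup n := PresentedGroup.of (Sum.inr i)

/-- `q k = p₁ p₂ ⋯ p_k` where `pᵢ = [aᵢ,bᵢ]`. -/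
noncomputable def q {n : ℕ} (k : ℕ) : SurfaceGroup n :=
  ((List.ofFn fun i : Fin n => ⁅a i, b i⁆).take k).prod

/-- The integral group ring `ℤG`. -/
abbrev A (n : ℕ) := MonoidAlgebra ℤ (SurfaceGroup n)

/-- Inclusion of the group in its group ring. -/
noncomputable def j {n : ℕ} : SurfaceGroup n →* A n := MonoidAlgebra.of ℤ (SurfaceGroup n)

/-- The Fox derivative `∂p/∂aᵢ = q_{i-1}(1 - aᵢbᵢaᵢ⁻¹)`. -/
noncomputable def Fa {n : ℕ} (i : Fin n) : A n :=
  j (q i.val) * (1 - j (a i * b i * (a i)⁻¹))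

/-- The Fox derivative `∂p/∂bᵢ = q_{i-1}aᵢ(1 - bᵢaᵢ⁻¹bᵢ⁻¹)`. -/
noncomputable def Fb {n : ℕ} (i : Fin n) : A n :=
  j (q i.val * a i) * (1 - j (b i * (a i)⁻¹ * (b i)⁻¹))

abbrev P0 (n : ℕ) := A n
abbrev P1 (n : ℕ) := Gen n → A n
abbrev P2 (n : ℕ) := A n

/-- Coefficients of `d₁`. -/
noncomputable def c {n : ℕ} : Gen n → A n
  | .inl i => j (a i) - 1
  | .inr i => j (b i) - 1

/-- Coefficients of `d₂` (the Fox derivatives of the relator). -/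
noncomputable def fox {n : ℕ} : Gen n → A n
  | .inl i => Fa i
  | .inr i => Fb i

/-- `d₁ : P₁ → P₀`, `yᵢ ↦ (aᵢ-1)x`, `zᵢ ↦ (bᵢ-1)x`. -/
noncomputable def d1 {n : ℕ} : P1 n →ₗ[A n] P0 n where
  toFun f := ∑ s, f s * c s
  map_add' f g := by simp [add_mul, Finset.sum_add_distrib]
  map_smul' r f := by simp [Finset.mul_sum, mul_assoc, smul_eq_mul, mul_add]

/-- `d₂ : P₂ → P₁`, `w ↦ Σᵢ (∂p/∂aᵢ)yᵢ + (∂p/∂bᵢ)zᵢ`. -/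
noncomputable def d2 {n : ℕ} : P2 n →ₗ[A n] P1 n where
  toFun r := fun s => r * fox s
  map_add' r r' := by funext s; simp [add_mul]
  map_smul' r r' := by funext s; simp [mul_assoc, smul_eq_mul]

/-- The augmentation `ε : ℤG → ℤ`. -/
noncomputable def aug {n : ℕ} : A n →ₐ[ℤ] ℤ := MonoidAlgebra.lift ℤ ℤ (SurfaceGroup n) 1

/-! ### Auxiliary machinery -/

noncomputable def isoAdd {R : Type*} [Ring R] {X Y : ModuleCat R} (e : X ≅ Y) : X ≃+ Y where
  toFun := e.hom
  invFun := e.inv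
  left_inv x := by simp
  right_inv y := by simp
  map_add' x y := map_add e.hom.hom x y

/-- Any map into a commutative group kills the relator. -/
theorem lift_rel_comm {n : ℕ} {H : Type*} [CommGroup H] (v : Gen n → H) :
    FreeGroup.lift v (rel n) = 1 := by
  rw [rel, map_list_prod]
  apply List.prod_eq_one
  intro x hx
  rw [List.map_ofFn] at hx
  obtain ⟨i, rfl⟩ := List.mem_ofFn.1 hx
  simp only [Function.comp_apply, map_commutatorElement]
  exact commutatorElement_eq_one_iff_commute.2 (mul_comm _ _)

theorem rel_mem_rels {n : ℕ} : rel n ∈ ({rel n} : Set (FreeGroup (Gen n))) := rfl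

/-- Hom to a commutative group from arbitrary values on generators. -/
noncomputable def toCommHom {n : ℕ} {H : Type*} [CommGroup H] (v : Gen n → H) :
    SurfaceGroup n →* H :=
  PresentedGroup.toGroup (f := v) (by
    intro r hr
    rw [Set.mem_singleton_iff] at hr
    subst hr
    exact lift_rel_comm v)

@[simp] theorem toCommHom_of {n : ℕ} {H : Type*} [CommGroup H] (v : Gen n → H) (x : Gen n) :
    toCommHom v (PresentedGroup.of x) = v x := PresentedGroup.toGroup.of _

/-- The canonical projection from the free group. -/
noncomputable def mkSG (n : ℕ) : FreeGroup (Gen n) →* SurfaceGroup n :=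
  FreeGroup.lift (fun x => PresentedGroup.of x)

theorem mkSG_eq (n : ℕ) : mkSG n = PresentedGroup.mk _ := by
  ext x
  rfl

theorem mkSG_rel (n : ℕ) : mkSG n (rel n) = 1 := by
  rw [mkSG_eq]
  exact (QuotientGroup.eq_one_iff _).2
    (Subgroup.subset_normalClosure rel_mem_rels)

/-! ### Normalized 2-cocycles and the twisted extension -/

/-- A normalized 2-cocycle on `G` with values in `M` (trivial action). -/
structure NC (G : Type*) [Group G] (M : Type*) [AddCommGroup M] where
  f : G → G → M
  coc : ∀ g h k, f (g * h) k + f g h = f h k + f g (h * k)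
  norm : f 1 1 = 0

namespace NC

variable {G : Type*} [Group G] {M M' M'' : Type*} [AddCommGroup M] [AddCommGroup M']
  [AddCommGroup M'']

theorem ext' {c c' : NC G M} (h : c.f = c'.f) : c = c' := by
  cases c; cases c'; simpa using h

theorem norm_left (c : NC G M) (g : G) : c.f 1 g = 0 := by
  have := c.coc 1 1 g
  simpa [c.norm] using this

theorem norm_right (c : NC G M) (g : G) : c.f g 1 = 0 := by
  have := c.coc g 1 1
  simpa [c.norm_left] using this

theorem inv_symm (c : NC G M) (g : G) : c.f g g⁻¹ = c.f g⁻¹ g := by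
  have := c.coc g g⁻¹ g
  simpa [c.norm_left, c.norm_right] using this

/-- The twisted extension `M ×_c G`. -/
@[ext] structure E (c : NC G M) where
  t : M
  g : G

instance (c : NC G M) : Group (E c) where
  mul x y := ⟨x.t + y.t + c.f x.g y.g, x.g * y.g⟩
  one := ⟨0, 1⟩
  inv x := ⟨-x.t - c.f x.g x.g⁻¹, x.g⁻¹⟩
  mul_assoc x y z := by
    ext
    · show x.t + y.t + c.f x.g y.g + z.t + c.f (x.g * y.g) z.g
        = x.t + (y.t + z.t + c.f y.g z.g) + c.f x.g (y.g * z.g)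
      have h2 : c.f x.g y.g + c.f (x.g * y.g) z.g
          = c.f y.g z.g + c.f x.g (y.g * z.g) := by
        rw [add_comm]; exact c.coc x.g y.g z.g
      calc x.t + y.t + c.f x.g y.g + z.t + c.f (x.g * y.g) z.g
          = x.t + y.t + z.t + (c.f x.g y.g + c.f (x.g * y.g) z.g) := by abel
        _ = x.t + y.t + z.t + (c.f y.g z.g + c.f x.g (y.g * z.g)) := by rw [h2]
        _ = x.t + (y.t + z.t + c.f y.g z.g) + c.f x.g (y.g * z.g) := by abel
    · exact mul_assoc _ _ _
  one_mul x := by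
    ext
    · show 0 + x.t + c.f 1 x.g = x.t
      simp [c.norm_left]
    · exact one_mul _
  mul_one x := by
    ext
    · show x.t + 0 + c.f x.g 1 = x.t
      simp [c.norm_right]
    · exact mul_one _
  inv_mul_cancel x := by
    ext
    · show -x.t - c.f x.g x.g⁻¹ + x.t + c.f x.g⁻¹ x.g = 0
      rw [← c.inv_symm]
      abel
    · exact inv_mul_cancel _

variable {c : NC G M}

theorem mul_def (x y : E c) : x * y = ⟨x.t + y.t + c.f x.g y.g, x.g * y.g⟩ := rfl
theorem one_def : (1 : E c) = ⟨0, 1⟩ := rfl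
theorem inv_def (x : E c) : x⁻¹ = ⟨-x.t - c.f x.g x.g⁻¹, x.g⁻¹⟩ := rfl

theorem mul_t (x y : E c) : (x * y).t = x.t + y.t + c.f x.g y.g := rfl
theorem mul_g (x y : E c) : (x * y).g = x.g * y.g := rfl
theorem inv_t (x : E c) : (x⁻¹).t = -x.t - c.f x.g x.g⁻¹ := rfl
theorem inv_g (x : E c) : (x⁻¹).g = x.g⁻¹ := rfl
theorem one_t : (1 : E c).t = 0 := rfl
theorem one_g : (1 : E c).g = 1 := rfl

/-- `(t, 1)` is central. -/
theorem central (t : M) (x : E c) : (⟨t, 1⟩ : E c) * x = x * ⟨t, 1⟩ := by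
  rw [mul_def, mul_def]
  ext
  · simp only [c.norm_left, c.norm_right]
    abel
  · simp

/-- Pushforward of a cocycle. -/
def map (φ : M →+ M') (c : NC G M) : NC G M' where
  f g h := φ (c.f g h)
  coc g h k := by rw [← map_add, ← map_add, c.coc]
  norm := by show φ (c.f 1 1) = 0; rw [c.norm, map_zero]

/-- Pushforward as a group hom on extensions. -/
def mapHom (φ : M →+ M') (c : NC G M) : E c →* E (c.map φ) where
  toFun x := ⟨φ x.t, x.g⟩
  map_one' := by rw [one_def, one_def]; ext <;> simp
  map_mul' x y := by rw [mul_def, mul_def]; ext <;> simp [map]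

/-- Pairing of two cocycles. -/
def prod (c : NC G M) (c' : NC G M') : NC G (M × M') where
  f g h := (c.f g h, c'.f g h)
  coc g h k := by ext <;> simp [c.coc, c'.coc]
  norm := by ext <;> simp [c.norm, c'.norm]

/-- The projection to the base group. -/
def π (c : NC G M) : E c →* G where
  toFun := E.g
  map_one' := rfl
  map_mul' _ _ := rfl

end NC

/-! ### The transgression `T` -/

section T

variable {n : ℕ} {M M' : Type*} [AddCommGroup M] [AddCommGroup M']

/-- Lift of the generators into the twisted extension. -/
noncomputable def θ (c : NC (SurfaceGroup n) M) : FreeGroup (Gen n) →* NC.E c :=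
  FreeGroup.lift (fun x => ⟨0, PresentedGroup.of x⟩)

theorem θ_of (c : NC (SurfaceGroup n) M) (x : Gen n) :
    θ c (FreeGroup.of x) = ⟨0, PresentedGroup.of x⟩ := FreeGroup.lift_apply_of

theorem π_θ (c : NC (SurfaceGroup n) M) : (c.π).comp (θ c) = mkSG n := by
  ext x
  rw [MonoidHom.comp_apply, θ_of]
  rfl

theorem θ_rel_g (c : NC (SurfaceGroup n) M) : (θ c (rel n)).g = 1 := by
  have := DFunLike.congr_fun (π_θ c) (rel n)
  simp only [MonoidHom.coe_comp, Function.comp_apply] at this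
  rw [show (θ c (rel n)).g = c.π (θ c (rel n)) from rfl, this, mkSG_rel]

/-- The evaluation of the lifted relator: the "transgression" of the cocycle. -/
noncomputable def T (c : NC (SurfaceGroup n) M) : M := (θ c (rel n)).t

theorem T_map (φ : M →+ M') (c : NC (SurfaceGroup n) M) : T (c.map φ) = φ (T c) := by
  have h : (NC.mapHom φ c).comp (θ c) = θ (c.map φ) := by
    ext x
    · rw [MonoidHom.comp_apply, θ_of, θ_of]; exact map_zero φ
    · rw [MonoidHom.comp_apply, θ_of, θ_of]; rfl
  have h2 := DFunLike.congr_fun h (rel n)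
  simp only [MonoidHom.coe_comp, Function.comp_apply] at h2
  rw [T, T, ← h2]
  rfl

theorem T_congr {c c' : NC (SurfaceGroup n) M} (h : c.f = c'.f) : T c = T c' := by
  rw [NC.ext' h]

theorem T_add (c c' c'' : NC (SurfaceGroup n) M) (h : c''.f = c.f + c'.f) :
    T c'' = T c + T c' := by
  have e1 : T ((c.prod c').map (AddMonoidHom.fst M M)) = T c := T_congr rfl
  have e2 : T ((c.prod c').map (AddMonoidHom.snd M M)) = T c' := T_congr rfl
  rw [T_map] at e1 e2
  have e3 : T c'' = T ((c.prod c').map ((AddMonoidHom.fst M M) + (AddMonoidHom.snd M M))) := by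
    apply T_congr
    funext g h'
    show c''.f g h' = c.f g h' + c'.f g h'
    rw [h]
    rfl
  rw [e3, T_map]
  show (AddMonoidHom.fst M M) (T (c.prod c')) + (AddMonoidHom.snd M M) (T (c.prod c'))
    = T c + T c'
  rw [e1, e2]

theorem T_coboundary (c : NC (SurfaceGroup n) M) (φ : SurfaceGroup n → M) (hφ : φ 1 = 0)
    (h : ∀ g h', c.f g h' = φ g + φ h' - φ (g * h')) : T c = 0 := by
  classical
  let χ : SurfaceGroup n →* NC.E c :=
  { toFun := fun g => ⟨-φ g, g⟩
    map_one' := by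
      rw [NC.one_def]
      apply NC.E.ext
      · show -φ 1 = 0
        rw [hφ, neg_zero]
      · rfl
    map_mul' := fun g h' => by
      rw [NC.mul_def]
      apply NC.E.ext
      · show -φ (g * h') = -φ g + -φ h' + c.f g h'
        rw [h]
        abel
      · rfl }
  let zhom : Multiplicative M →* NC.E c :=
  { toFun := fun t => ⟨t.toAdd, 1⟩
    map_one' := rfl
    map_mul' := fun s t => by
      rw [NC.mul_def]
      apply NC.E.ext
      · show (s * t).toAdd = s.toAdd + t.toAdd + c.f 1 1
        rw [c.norm]
        simp
      · show (1 : SurfaceGroup n) = 1 * 1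
        rw [one_mul] }
  let μ : FreeGroup (Gen n) →* Multiplicative M :=
    FreeGroup.lift fun x => Multiplicative.ofAdd (φ (PresentedGroup.of x))
  have hcomm : ∀ (t : Multiplicative M) (x : NC.E c), zhom t * x = x * zhom t := fun t x =>
    NC.central t.toAdd x
  let Θ : FreeGroup (Gen n) →* NC.E c :=
  { toFun := fun w => zhom (μ w) * χ (mkSG n w)
    map_one' := by
      show zhom (μ 1) * χ (mkSG n 1) = 1
      rw [map_one, map_one, map_one, map_one, one_mul]
    map_mul' := fun u v => by
      show zhom (μ (u * v)) * χ (mkSG n (u * v)) = _ * _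
      rw [map_mul, map_mul, map_mul, map_mul]
      rw [mul_assoc, ← mul_assoc (zhom (μ v)), hcomm (μ v), mul_assoc, mul_assoc] }
  have key : θ c = Θ := by
    apply FreeGroup.ext_hom
    intro x
    show θ c (FreeGroup.of x) = zhom (μ (FreeGroup.of x)) * χ (mkSG n (FreeGroup.of x))
    rw [θ_of]
    have h1 : μ (FreeGroup.of x) = Multiplicative.ofAdd (φ (PresentedGroup.of x)) :=
      FreeGroup.lift_apply_of
    have h2 : mkSG n (FreeGroup.of x) = PresentedGroup.of x := FreeGroup.lift_apply_of
    rw [h1, h2]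
    show (⟨0, PresentedGroup.of x⟩ : NC.E c)
        = (⟨φ (PresentedGroup.of x), 1⟩ : NC.E c) * ⟨-φ (PresentedGroup.of x), PresentedGroup.of x⟩
    rw [NC.mul_def]
    apply NC.E.ext
    · show (0 : M) = φ (PresentedGroup.of x) + -φ (PresentedGroup.of x)
        + c.f 1 (PresentedGroup.of x)
      rw [c.norm_left]
      abel
    · show PresentedGroup.of x = 1 * PresentedGroup.of x
      rw [one_mul]
  have hμ : μ (rel n) = 1 := lift_rel_comm _
  have hmk : mkSG n (rel n) = 1 := mkSG_rel n
  show (θ c (rel n)).t = 0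
  rw [key]
  show (zhom (μ (rel n)) * χ (mkSG n (rel n))).t = 0
  rw [hμ, hmk, map_one, map_one, one_mul]
  rfl

theorem T_zero_coboundary (c : NC (SurfaceGroup n) ℤ) (h : T c = 0) :
    ∃ φ : SurfaceGroup n → ℤ, φ 1 = 0 ∧ ∀ g h, c.f g h = φ g + φ h - φ (g * h) := by
  have hrel : ∀ r ∈ ({rel n} : Set (FreeGroup (Gen n))),
      FreeGroup.lift (fun x => (⟨0, PresentedGroup.of x⟩ : NC.E c)) r = 1 := by
    intro r hr
    rw [Set.mem_singleton_iff] at hr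
    subst hr
    show θ c (rel n) = 1
    rw [NC.one_def]
    apply NC.E.ext
    · exact h
    · exact θ_rel_g c
  let s := PresentedGroup.toGroup hrel
  have hs : ∀ x, s (PresentedGroup.of x) = (⟨0, PresentedGroup.of x⟩ : NC.E c) := fun x =>
    PresentedGroup.toGroup.of hrel
  have hπ : ∀ g, (s g).g = g := by
    have : c.π.comp s = MonoidHom.id _ := by
      ext x
      rw [MonoidHom.comp_apply, hs]
      rfl
    intro g
    have h2 := DFunLike.congr_fun this g
    simp at h2; exact h2
  refine ⟨fun g => -(s g).t, ?_, ?_⟩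
  · have h1 : s 1 = 1 := map_one s
    show -(s 1).t = 0
    rw [h1]
    rfl
  · intro g h'
    have hm : s g * s h' = s (g * h') := (map_mul s g h').symm
    rw [NC.mul_def] at hm
    have ht : (s g).t + (s h').t + c.f (s g).g (s h').g = (s (g * h')).t := by
      rw [← hm]
    rw [hπ, hπ] at ht
    show c.f g h' = -(s g).t + -(s h').t - -(s (g * h')).t
    omega

end T

/-! ### H¹: homs to `ℤ` -/

section H1calc

variable {n : ℕ}

/-- Hom group from the surface group to `ℤ` is `ℤ`-valued functions on generators. -/
noncomputable def homEquiv (n : ℕ) :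
    (Additive (SurfaceGroup n) →+ ℤ) ≃+ (Gen n → ℤ) where
  toFun φ x := φ (Additive.ofMul (PresentedGroup.of x))
  invFun v := MonoidHom.toAdditiveLeft (toCommHom fun x => Multiplicative.ofAdd (v x))
  left_inv φ := by
    have h : toCommHom (fun x => Multiplicative.ofAdd
        (φ (Additive.ofMul (PresentedGroup.of x))))
        = AddMonoidHom.toMultiplicativeRight φ := by
      ext x
      rw [toCommHom_of]
      rfl
    show MonoidHom.toAdditiveLeft (toCommHom fun x =>
      Multiplicative.ofAdd (φ (Additive.ofMul (PresentedGroup.of x)))) = φ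
    rw [h]
    exact MonoidHom.toAdditiveLeft.apply_symm_apply φ
  right_inv v := by
    funext x
    show Multiplicative.toAdd (toCommHom (fun x => Multiplicative.ofAdd (v x))
      (PresentedGroup.of x)) = v x
    rw [toCommHom_of]
    rfl
  map_add' φ φ' := rfl

/-- Reindexing an integer-valued function space. -/
def piReindex {ι ι' : Type*} (e : ι ≃ ι') : (ι → ℤ) ≃+ (ι' → ℤ) :=
  { Equiv.piCongrLeft' (fun _ => ℤ) e with map_add' := fun _ _ => rfl }

def genEquiv (n : ℕ) : Gen n ≃ Fin (2 * n) := finSumFinEquiv.trans (finCongr (two_mul n).symm)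

end H1calc

/-! ### H²: the transgression map on 2-cocycles -/

section H2calc

open groupCohomology

variable (n : ℕ)

noncomputable abbrev Atriv (n : ℕ) : Rep ℤ (SurfaceGroup n) := Rep.trivial ℤ (SurfaceGroup n) ℤ

/-- The identity, re-typing elements of the trivial representation as integers. -/
noncomputable def vZ {n : ℕ} (x : Atriv n) : ℤ := x

/-- The identity, re-typing integers as elements of the trivial representation. -/
noncomputable def zV {n : ℕ} (m : ℤ) : Atriv n := m

theorem triv_apply {n : ℕ} (g : SurfaceGroup n) (x : Atriv n) : (Atriv n).ρ g x = x := rfl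

theorem mem_cob2_iff {n : ℕ} (f : SurfaceGroup n × SurfaceGroup n → Atriv n) :
    f ∈ coboundaries₂ (Atriv n) ↔
      ∃ x : SurfaceGroup n → Atriv n, ∀ g h, (Atriv n).ρ g (x h) - x (g * h) + x g = f (g, h) := by
  constructor
  · rintro ⟨x, hx⟩
    exact ⟨x, fun g h => congrFun hx (g, h)⟩
  · rintro ⟨x, hx⟩
    exact ⟨x, funext fun p => hx p.1 p.2⟩

theorem vZ_add {n : ℕ} (x y : Atriv n) : vZ (x + y) = vZ x + vZ y := rfl
theorem vZ_sub {n : ℕ} (x y : Atriv n) : vZ (x - y) = vZ x - vZ y := rfl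

/-- The normalized cocycle associated to a mathlib 2-cocycle. -/
noncomputable def NCof (f : cocycles₂ (Atriv n)) : NC (SurfaceGroup n) ℤ where
  f g h := vZ (f (g, h)) - vZ (f (1, 1))
  coc g h k := by
    have h1 := (mem_cocycles₂_iff (A := Atriv n) f).1 f.2 g h k
    rw [triv_apply] at h1
    have h1' := congrArg vZ h1
    rw [vZ_add, vZ_add] at h1'
    linear_combination h1'
  norm := sub_self _

/-- The transgression, as a linear map on 2-cocycles. -/
noncomputable def Ncoc : cocycles₂ (Atriv n) →ₗ[ℤ] ℤ :=
  AddMonoidHom.toIntLinearMap <| AddMonoidHom.mk' (fun f => T (NCof n f)) <| by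
    intro f f'
    apply T_add
    funext g h
    show vZ ((f + f') ((g, h))) - vZ ((f + f') ((1, 1)))
      = (vZ (f (g, h)) - vZ (f (1, 1))) + (vZ (f' (g, h)) - vZ (f' (1, 1)))
    have e1 : vZ ((f + f') ((g, h))) = vZ (f (g, h)) + vZ (f' (g, h)) := rfl
    have e2 : vZ ((f + f') ((1, 1))) = vZ (f (1, 1)) + vZ (f' (1, 1)) := rfl
    linear_combination e1 - e2

theorem Ncoc_coboundary (f : cocycles₂ (Atriv n)) (hf : ⇑f ∈ coboundaries₂ (Atriv n)) :
    Ncoc n f = 0 := by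
  obtain ⟨x, hx⟩ := (mem_cob2_iff f).1 hf
  simp only [triv_apply, Representation.trivial_apply] at hx
  apply T_coboundary (NCof n f) (fun g => vZ (x g) - vZ (x 1)) (by simp)
  intro g h
  have e1 := congrArg (vZ (n := n)) (hx g h)
  have e2 := congrArg (vZ (n := n)) (hx 1 1)
  rw [one_mul] at e2
  rw [vZ_add, vZ_sub] at e1 e2
  show vZ (f (g, h)) - vZ (f (1, 1))
    = (vZ (x g) - vZ (x 1)) + (vZ (x h) - vZ (x 1)) - (vZ (x (g * h)) - vZ (x 1))
  linear_combination e2 - e1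

theorem Ncoc_zero (f : cocycles₂ (Atriv n)) (h : Ncoc n f = 0) :
    ⇑f ∈ coboundaries₂ (Atriv n) := by
  obtain ⟨φ, hφ1, hφ⟩ := T_zero_coboundary (NCof n f) h
  rw [mem_cob2_iff]
  refine ⟨fun g => zV (φ g + vZ (f (1, 1))), ?_⟩
  intro g h
  rw [triv_apply]
  have e1 : vZ (f (g, h)) - vZ (f (1, 1)) = φ g + φ h - φ (g * h) := hφ g h
  show (φ h + vZ (f (1, 1))) - (φ (g * h) + vZ (f (1, 1))) + (φ g + vZ (f (1, 1)))
    = vZ (f (g, h))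
  linear_combination -e1

/-! #### Surjectivity: an explicit cocycle with transgression 1 -/

section Surj

variable {n : ℕ} (i0 : Fin n)

noncomputable def αH : SurfaceGroup n →* Multiplicative ℤ :=
  toCommHom fun x => if x = Sum.inl i0 then Multiplicative.ofAdd 1 else 1

noncomputable def βH : SurfaceGroup n →* Multiplicative ℤ :=
  toCommHom fun x => if x = Sum.inr i0 then Multiplicative.ofAdd 1 else 1

noncomputable def αz (g : SurfaceGroup n) : ℤ := (αH i0 g).toAdd
noncomputable def βz (g : SurfaceGroup n) : ℤ := (βH i0 g).toAdd

theorem αz_mul (g h : SurfaceGroup n) : αz i0 (g * h) = αz i0 g + αz i0 h := by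
  rw [αz, αz, αz, map_mul]; rfl
theorem αz_one : αz i0 (1 : SurfaceGroup n) = 0 := by rw [αz, map_one]; rfl
theorem αz_inv (g : SurfaceGroup n) : αz i0 g⁻¹ = -αz i0 g := by
  rw [αz, αz, map_inv]; rfl
theorem βz_mul (g h : SurfaceGroup n) : βz i0 (g * h) = βz i0 g + βz i0 h := by
  rw [βz, βz, βz, map_mul]; rfl
theorem βz_one : βz i0 (1 : SurfaceGroup n) = 0 := by rw [βz, map_one]; rfl
theorem βz_inv (g : SurfaceGroup n) : βz i0 g⁻¹ = -βz i0 g := by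
  rw [βz, βz, map_inv]; rfl

theorem αz_a (i : Fin n) : αz i0 (a i) = if i = i0 then 1 else 0 := by
  rw [αz, a, αH, toCommHom_of]
  by_cases h : i = i0 <;> simp [h]
theorem αz_b (i : Fin n) : αz i0 (b i) = 0 := by
  rw [αz, b, αH, toCommHom_of]
  simp
theorem βz_a (i : Fin n) : βz i0 (a i) = 0 := by
  rw [βz, a, βH, toCommHom_of]
  simp
theorem βz_b (i : Fin n) : βz i0 (b i) = if i = i0 then 1 else 0 := by
  rw [βz, b, βH, toCommHom_of]
  by_cases h : i = i0 <;> simp [h]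

/-- The explicit normalized cocycle `(g, h) ↦ α(g)β(h)`. -/
noncomputable def c0 : NC (SurfaceGroup n) ℤ where
  f g h := αz i0 g * βz i0 h
  coc g h k := by
    show αz i0 (g * h) * βz i0 k + αz i0 g * βz i0 h
      = αz i0 h * βz i0 k + αz i0 g * βz i0 (h * k)
    rw [αz_mul, βz_mul]
    ring
  norm := by
    show αz i0 1 * βz i0 1 = 0
    rw [αz_one, zero_mul]

theorem c0_f (g h : SurfaceGroup n) : (c0 i0).f g h = αz i0 g * βz i0 h := rfl

theorem comm_g {M : Type*} [AddCommGroup M] (c : NC (SurfaceGroup n) M)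
    (x y : NC.E c) : (⁅x, y⁆).g = ⁅x.g, y.g⁆ := rfl

theorem comm_t (g h : SurfaceGroup n) :
    (⁅(⟨0, g⟩ : NC.E (c0 i0)), (⟨0, h⟩ : NC.E (c0 i0))⁆).t
      = αz i0 g * βz i0 h - αz i0 h * βz i0 g := by
  simp only [commutatorElement_def, NC.mul_t, NC.mul_g, NC.inv_t, NC.inv_g, c0_f,
    αz_mul, βz_mul, αz_inv, βz_inv]
  ring

theorem prod_t (l : List (NC.E (c0 i0))) (hl : ∀ x ∈ l, αz i0 x.g = 0) :
    l.prod.t = (l.map NC.E.t).sum := by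
  induction l with
  | nil => rfl
  | cons x l ih =>
    rw [List.prod_cons, NC.mul_t, List.map_cons, List.sum_cons,
      ih (fun y hy => hl y (List.mem_cons_of_mem x hy)), c0_f,
      hl x (List.mem_cons_self), zero_mul, add_zero]

theorem T_c0 : T (c0 i0) = 1 := by
  have hθ : ∀ i : Fin n,
      θ (c0 i0) ⁅(FreeGroup.of (Sum.inl i) : FreeGroup (Gen n)), FreeGroup.of (Sum.inr i)⁆
        = ⁅(⟨0, a i⟩ : NC.E (c0 i0)), (⟨0, b i⟩ : NC.E (c0 i0))⁆ := by
    intro i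
    rw [map_commutatorElement, θ_of, θ_of]
    rfl
  show ((θ (c0 i0)) ((List.ofFn fun i : Fin n =>
    ⁅(FreeGroup.of (Sum.inl i) : FreeGroup (Gen n)), FreeGroup.of (Sum.inr i)⁆).prod)).t = 1
  rw [map_list_prod, List.map_ofFn]
  have hfun : (θ (c0 i0)) ∘ (fun i : Fin n =>
      ⁅(FreeGroup.of (Sum.inl i) : FreeGroup (Gen n)), FreeGroup.of (Sum.inr i)⁆)
      = fun i => ⁅(⟨0, a i⟩ : NC.E (c0 i0)), (⟨0, b i⟩ : NC.E (c0 i0))⁆ :=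
    funext fun i => hθ i
  rw [hfun, prod_t, List.map_ofFn]
  · have hcomp : (NC.E.t ∘ fun i : Fin n => ⁅(⟨0, a i⟩ : NC.E (c0 i0)), (⟨0, b i⟩ : NC.E (c0 i0))⁆)
        = fun i : Fin n => if i = i0 then (1 : ℤ) else 0 := by
      funext i
      rw [Function.comp_apply, comm_t, αz_a, βz_b, αz_b, βz_a]
      by_cases h : i = i0 <;> simp [h]
    rw [hcomp, List.sum_ofFn]
    simp
  · intro x hx
    obtain ⟨i, rfl⟩ := List.mem_ofFn.1 hx
    rw [comm_g, commutatorElement_def, αz_mul, αz_mul, αz_mul, αz_inv, αz_inv]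
    ring

open groupCohomology in
/-- The explicit 2-cocycle with transgression `1`. -/
noncomputable def f0 : cocycles₂ (Atriv n) :=
  ⟨fun p => zV (αz i0 p.1 * βz i0 p.2), by
    rw [mem_cocycles₂_iff]
    intro g h k
    rw [triv_apply]
    show zV (αz i0 (g * h) * βz i0 k) + zV (αz i0 g * βz i0 h)
      = zV (αz i0 h * βz i0 k) + zV (αz i0 g * βz i0 (h * k))
    have : αz i0 (g * h) * βz i0 k + αz i0 g * βz i0 h
        = αz i0 h * βz i0 k + αz i0 g * βz i0 (h * k) := by
      rw [αz_mul, βz_mul]; ring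
    exact congrArg zV this⟩

theorem Ncoc_f0 : Ncoc n (f0 i0) = 1 := by
  show T (NCof n (f0 i0)) = 1
  rw [T_congr (c' := c0 i0), T_c0]
  funext g h
  show (αz i0 g * βz i0 h) - (αz i0 1 * βz i0 1) = αz i0 g * βz i0 h
  rw [αz_one, zero_mul, sub_zero]

end Surj

open groupCohomology in
/-- The transgression on `H²`. -/
noncomputable def NH2 (n : ℕ) :
    (cocycles₂ (Atriv n) ⧸ LinearMap.ker (H2π (Atriv n)).hom) →ₗ[ℤ] ℤ :=
  Submodule.liftQ (LinearMap.ker (H2π (Atriv n)).hom) (Ncoc n)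
    (fun f hf => Ncoc_coboundary n f ((H2π_eq_zero_iff f).1 hf))

end H2calc

/-- for the trivial `ℤG`-module `ℤ`, `H⁰(G,ℤ) ≅ ℤ`,
`H¹(G,ℤ) ≅ ℤ²ⁿ` and `H²(G,ℤ) ≅ ℤ`. -/
theorem statement13 (n : ℕ) (hn : 1 ≤ n) :
    Nonempty (groupCohomology (Rep.trivial ℤ (SurfaceGroup n) ℤ) 0 ≃+ ℤ) ∧
    Nonempty (groupCohomology (Rep.trivial ℤ (SurfaceGroup n) ℤ) 1 ≃+ (Fin (2 * n) → ℤ)) ∧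
    Nonempty (groupCohomology (Rep.trivial ℤ (SurfaceGroup n) ℤ) 2 ≃+ ℤ) := by
  refine ⟨⟨?_⟩, ⟨?_⟩, ⟨?_⟩⟩
  · exact isoAdd (groupCohomology.H0IsoOfIsTrivial (Atriv n))
  · exact (isoAdd (groupCohomology.H1IsoOfIsTrivial (Atriv n))).trans <|
      (homEquiv n).trans (piReindex (genEquiv n))
  · have hinj : Function.Injective (NH2 n) := by
      have h1 := Submodule.ker_liftQ_eq_bot (LinearMap.ker (groupCohomology.H2π (Atriv n)).hom)
        (Ncoc n) (fun f hf => Ncoc_coboundary n f ((groupCohomology.H2π_eq_zero_iff f).1 hf))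
        (fun f hf => LinearMap.mem_ker.2 ((groupCohomology.H2π_eq_zero_iff f).2 (Ncoc_zero n f hf)))
      exact LinearMap.ker_eq_bot.mp h1
    have hsurj : Function.Surjective (NH2 n) := by
      intro m
      refine ⟨Submodule.Quotient.mk (m • f0 ⟨0, hn⟩), ?_⟩
      have h2 : NH2 n (Submodule.Quotient.mk (m • f0 ⟨0, hn⟩)) = Ncoc n (m • f0 ⟨0, hn⟩) :=
        Submodule.liftQ_apply _ _ _
      rw [h2, map_smul, Ncoc_f0, smul_eq_mul, mul_one]
    have hπs : Function.Surjective (groupCohomology.H2π (Atriv n)).hom :=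
      (ModuleCat.epi_iff_surjective _).1 inferInstance
    exact (LinearMap.quotKerEquivOfSurjective _ hπs).symm.toAddEquiv.trans
      (LinearEquiv.ofBijective (NH2 n) ⟨hinj, hsurj⟩).toAddEquiv

end SurfaceOr
end
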